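/- Let p, q, u, v ∈ ℂ with p ≠ 0, q ≠ 0 and u ≠ v, and define U = (v/p)(pu − qv)/(u − v) and V = (u/q)(pu − qv)/(u − v) (the map F_III). If moreover U ≠ V, then (V/p)(pU − qV)/(U − V) = u and (U/q)(pU − qV)/(U − V) = v; that is, F_III is an involution. -/

import Mathlib

/-- The map F_III is an involution. -/
theorem stmt_6 (p q u v U V : ℂ) (hp : p ≠ 0) (hq : q ≠ 0) (huv : u ≠ v)
    (hU : U = v / p * (p * u - q * v) / (u - v))
    (hV : V = u / q * (p * u - q * v) / (u - v))
    (hUV : U ≠ V) :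
    V / p * (p * U - q * V) / (U - V) = u ∧
    U / q * (p * U - q * V) / (U - V) = v := by
  have huv' : u - v ≠ 0 := sub_ne_zero.mpr huv
  have hA : p * u - q * v ≠ 0 := by
    intro h
    apply hUV
    rw [hU, hV, h]
    simp
  have h1 : p * U - q * V = -(p * u - q * v) := by
    rw [hU, hV]; field_simp; ring
  have h2 : U - V = -(p * u - q * v) ^ 2 / (p * q * (u - v)) := by
    rw [hU, hV]; field_simp; ring
  constructor
  · rw [h1, h2, hV]; field_simp; exact mul_div_cancel_right₀ _ (by rwa [mul_comm u p])
  · rw [h1, h2, hU]; field_simp; exact mul_div_cancel_right₀ _ (by rwa [mul_comm v q])
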